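/- For every i ≥ 0 there exists a binary tree with n = 2^i leaves in which the leaf indexed i (for i = 0,...,n-1, ordered appropriately) has depth at most 1 + 2⌊log₂(i+1)⌋; consequently for any probability distribution w_0 ≥ w_1 ≥ ... on the leaves (assigned in decreasing order of probability), the expected depth is at most 1 + Σ_i 2 w_i ⌊log₂(i+1)⌋. -/
import Mathlib

/-- Finite binary trees: a binary code is such a tree, its leaves being the symbols. -/
inductive BinTree : Type
  | leaf : BinTree
  | node : BinTree → BinTree → BinTree

/-- The list of depths of the leaves of a binary tree, in left-to-right order;
the leaves of the tree are thereby labeled `0, ..., n-1`. -/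
def BinTree.depths : BinTree → List ℕ
  | .leaf => [0]
  | .node l r => (l.depths ++ r.depths).map (· + 1)

/-- Complete binary tree of depth `n`. -/
def BinTree.complete : ℕ → BinTree
  | 0 => .leaf
  | n+1 => .node (complete n) (complete n)

lemma BinTree.complete_depths (n : ℕ) :
    (BinTree.complete n).depths = List.replicate (2 ^ n) n := by
  induction n with
  | zero => rfl
  | succ n ih =>
    simp [complete, depths, ih, List.map_replicate, ← List.replicate_add, pow_succ]
    ring_nf

/-- Spine tree: `spine m j` holds blocks `j, j+1, ..., j+m-1` plus a final leaf. -/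
def BinTree.spine : ℕ → ℕ → BinTree
  | 0, _ => .leaf
  | m+1, j => .node (complete j) (spine m (j+1))

lemma BinTree.spine_depths (m j : ℕ) :
    (BinTree.spine (m+1) j).depths =
      List.replicate (2 ^ j) (j + 1) ++ ((BinTree.spine m (j+1)).depths.map (· + 1)) := by
  simp [spine, depths, complete_depths, List.map_replicate]

lemma BinTree.spine_length (m j : ℕ) :
    (BinTree.spine m j).depths.length + 2 ^ j = 2 ^ (j + m) + 1 := by
  induction m generalizing j with
  | zero => simp [spine, depths]; omega
  | succ m ih =>
    rw [spine_depths]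
    simp only [List.length_append, List.length_replicate, List.length_map]
    have h1 := ih (j + 1)
    have he : j + 1 + m = j + (m + 1) := by omega
    rw [he] at h1
    have h2 : 2 ^ (j+1) = 2 ^ j + 2 ^ j := by ring
    omega

lemma BinTree.spine_get (m j : ℕ) (i : ℕ) (h : i < (BinTree.spine m j).depths.length) :
    (BinTree.spine m j).depths[i] + j ≤ 2 * Nat.log 2 (i + 2 ^ j) + 1 := by
  induction m generalizing j i with
  | zero =>
    simp only [spine, depths, List.length_singleton] at h ⊢
    interval_cases i
    simp only [List.getElem_singleton, zero_add]
    have : Nat.log 2 (2 ^ j) = j := Nat.log_pow one_lt_two j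
    omega
  | succ m ih =>
    rw [List.getElem_of_eq (spine_depths m j)]
    rw [spine_depths] at h
    by_cases hi : i < 2 ^ j
    · rw [List.getElem_append_left (by simpa using hi)]
      rw [List.getElem_replicate]
      have hlog : j ≤ Nat.log 2 (i + 2 ^ j) := by
        have := Nat.log_mono_right (b := 2) (show 2 ^ j ≤ i + 2 ^ j by omega)
        rwa [Nat.log_pow one_lt_two j] at this
      omega
    · have hi' : 2 ^ j ≤ i := by omega
      have hlen : i - 2 ^ j < ((spine m (j+1)).depths.map (· + 1)).length := by
        simp only [List.length_append, List.length_replicate, List.length_map] at h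
        simp only [List.length_map]
        omega
      rw [List.getElem_append_right (by simpa using hi')]
      simp only [List.length_replicate]
      rw [List.getElem_map]
      have := ih (j + 1) (i - 2 ^ j) (by simpa using hlen)
      have harg : i - 2 ^ j + 2 ^ (j+1) = i + 2 ^ j := by
        have : 2 ^ (j+1) = 2 ^ j + 2 ^ j := by ring
        omega
      rw [harg] at this
      omega

/-- The tree used in the theorem. -/
def BinTree.rankTree : ℕ → BinTree
  | 0 => .leaf
  | k+1 => .node .leaf (spine k 1)

lemma BinTree.rankTree_length (k : ℕ) :
    (BinTree.rankTree k).depths.length = 2 ^ k := by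
  cases k with
  | zero => rfl
  | succ k =>
    simp only [rankTree, depths, List.map_append, List.length_map, List.length_append,
      List.length_singleton]
    have := spine_length k 1
    have h2 : 2 ^ (k+1) = 2 * 2 ^ k := by ring
    have h3 : 2 ^ (1 + k) = 2 * 2 ^ k := by rw [pow_add]; ring
    omega

lemma BinTree.rankTree_get (k : ℕ) (i : ℕ) (h : i < (BinTree.rankTree k).depths.length) :
    (BinTree.rankTree k).depths[i] ≤ 2 * Nat.log 2 (i + 1) + 1 := by
  cases k with
  | zero =>
    simp only [rankTree, depths, List.length_singleton] at h ⊢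
    interval_cases i
    simp
  | succ k =>
    simp only [rankTree, depths] at h ⊢
    by_cases hi : i = 0
    · subst hi
      have heq : List.map (· + 1) (([0] : List ℕ) ++ (BinTree.spine k 1).depths)
          = 1 :: List.map (· + 1) (BinTree.spine k 1).depths := by
        simp
      rw [List.getElem_of_eq heq, List.getElem_cons_zero]
      omega
    · have h1 : 1 ≤ i := by omega
      simp only [List.length_map, List.length_append, List.length_singleton] at h
      rw [List.getElem_map]
      have hlen : i - 1 < (BinTree.spine k 1).depths.length := by omega
      rw [List.getElem_append_right (by simpa using h1)]
      have := spine_get k 1 (i - 1) hlen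
      simp only [List.length_singleton]
      have harg : i - 1 + 2 ^ 1 = i + 1 := by omega
      rw [harg] at this
      omega

lemma floor_logb_succ (i : ℕ) :
    (⌊Real.logb 2 ((i : ℝ) + 1)⌋ : ℝ) = (Nat.log 2 (i + 1) : ℝ) := by
  have h1 : ((i : ℝ) + 1) = ((i + 1 : ℕ) : ℝ) := by push_cast; ring
  have h2 : (2 : ℝ) = ((2 : ℕ) : ℝ) := by norm_num
  rw [h1, h2, Real.floor_logb_natCast (by positivity), Int.log_natCast]
  norm_cast

theorem exists_code_by_rank (k : ℕ) :
    ∃ t : BinTree, t.depths.length = 2 ^ k ∧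
      (∀ i : Fin t.depths.length,
        (t.depths.get i : ℝ) ≤ 1 + 2 * (⌊Real.logb 2 (((i : ℕ) : ℝ) + 1)⌋ : ℝ)) ∧
      ∀ w : Fin t.depths.length → ℝ, (∀ i, 0 ≤ w i) →
        (∀ i j, i ≤ j → w j ≤ w i) → ∑ i, w i = 1 →
        ∑ i, w i * (t.depths.get i : ℝ) ≤
          1 + ∑ i, 2 * w i * (⌊Real.logb 2 (((i : ℕ) : ℝ) + 1)⌋ : ℝ) := by
  refine ⟨BinTree.rankTree k, BinTree.rankTree_length k, ?_, ?_⟩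
  · intro i
    have h := BinTree.rankTree_get k i i.isLt
    rw [floor_logb_succ]
    have : ((BinTree.rankTree k).depths.get i : ℝ)
        ≤ ((2 * Nat.log 2 ((i : ℕ) + 1) + 1 : ℕ) : ℝ) := by
      exact_mod_cast h
    push_cast at this ⊢
    linarith
  · intro w hw _ hsum
    have hbound : ∀ i : Fin (BinTree.rankTree k).depths.length,
        w i * ((BinTree.rankTree k).depths.get i : ℝ)
          ≤ w i * (1 + 2 * (⌊Real.logb 2 (((i : ℕ) : ℝ) + 1)⌋ : ℝ)) := by
      intro i
      refine mul_le_mul_of_nonneg_left ?_ (hw i)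
      have h := BinTree.rankTree_get k i i.isLt
      rw [floor_logb_succ]
      have : ((BinTree.rankTree k).depths.get i : ℝ)
          ≤ ((2 * Nat.log 2 ((i : ℕ) + 1) + 1 : ℕ) : ℝ) := by exact_mod_cast h
      push_cast at this ⊢
      linarith
    calc ∑ i, w i * ((BinTree.rankTree k).depths.get i : ℝ)
        ≤ ∑ i, w i * (1 + 2 * (⌊Real.logb 2 (((i : ℕ) : ℝ) + 1)⌋ : ℝ)) :=
          Finset.sum_le_sum fun i _ => hbound i
      _ = ∑ i, w i + ∑ i, 2 * w i * (⌊Real.logb 2 (((i : ℕ) : ℝ) + 1)⌋ : ℝ) := by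
          rw [← Finset.sum_add_distrib]; congr 1; ext i; ring
      _ = 1 + ∑ i, 2 * w i * (⌊Real.logb 2 (((i : ℕ) : ℝ) + 1)⌋ : ℝ) := by rw [hsum]
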